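/- A locally soluble, locally finite simple group has prime order. -/

import Mathlib

open Subgroup
open scoped commutatorElement

private lemma conj_mem_map_derived {G : Type*} [Group G] (K : Subgroup G) (n : ℕ)
    {x g : G} (hg : g ∈ K)
    (hx : x ∈ (derivedSeries K n).map K.subtype) :
    g * x * g⁻¹ ∈ (derivedSeries K n).map K.subtype := by
  obtain ⟨x', hx', rfl⟩ := hx
  exact ⟨⟨g, hg⟩ * x' * ⟨g, hg⟩⁻¹, (derivedSeries_normal _ n).conj_mem x' hx' ⟨g, hg⟩, rfl⟩

private lemma exists_conj_list {G : Type*} [Group G] {c x : G}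
    (hx : x ∈ Subgroup.normalClosure ({c} : Set G)) :
    ∃ l : List G, (∀ y ∈ l, ∃ g : G, y = g * c * g⁻¹ ∨ y = g * c⁻¹ * g⁻¹) ∧ l.prod = x := by
  have hx' : x ∈ Submonoid.closure
      (Group.conjugatesOfSet ({c} : Set G) ∪ (Group.conjugatesOfSet ({c} : Set G))⁻¹) := by
    have := Subgroup.closure_toSubmonoid (Group.conjugatesOfSet ({c} : Set G))
    rw [← Subgroup.mem_toSubmonoid] at hx
    rw [Subgroup.normalClosure] at hx
    rwa [this] at hx
  obtain ⟨l, hl, hprod⟩ := Submonoid.exists_list_of_mem_closure hx'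
  refine ⟨l, fun y hy => ?_, hprod⟩
  rcases hl y hy with h | h
  · obtain ⟨a, ha, hconj⟩ := Group.mem_conjugatesOfSet_iff.mp h
    rw [Set.mem_singleton_iff] at ha
    subst ha
    obtain ⟨g, hg⟩ := isConj_iff.mp hconj
    exact ⟨g, Or.inl hg.symm⟩
  · obtain ⟨a, ha, hconj⟩ := Group.mem_conjugatesOfSet_iff.mp (Set.mem_inv.mp h)
    rw [Set.mem_singleton_iff] at ha
    subst ha
    obtain ⟨g, hg⟩ := isConj_iff.mp hconj
    refine ⟨g, Or.inr ?_⟩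
    rw [← inv_inv y, ← hg]
    group

/-- A locally soluble, locally finite simple group has prime order. -/
theorem stmt_14 {G : Type*} [Group G] [IsSimpleGroup G]
    (hlf : ∀ S : Finset G, Finite (Subgroup.closure (S : Set G)))
    (hls : ∀ S : Finset G, IsSolvable (Subgroup.closure (S : Set G))) :
    ∃ p : ℕ, p.Prime ∧ Nat.card G = p := by
  classical
  -- Step 1: G is commutative.
  have hcomm : ∀ a b : G, a * b = b * a := by
    intro a b
    by_contra hab
    set c : G := ⁅a, b⁆ with hc
    have hc1 : c ≠ 1 := fun h => hab (commutatorElement_eq_one_iff_mul_comm.mp h)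
    -- the normal closure of c is all of G
    have hncl : Subgroup.normalClosure ({c} : Set G) = ⊤ := by
      rcases Subgroup.normalClosure_normal.eq_bot_or_eq_top (H := Subgroup.normalClosure ({c} : Set G))
        with h | h
      · exact absurd (h ▸ Subgroup.subset_normalClosure (Set.mem_singleton c))
          (by simp [hc1])
      · exact h
    -- express a and b as products of conjugates of c and c⁻¹
    obtain ⟨la, hla, hpa⟩ := exists_conj_list (c := c) (x := a) (hncl ▸ Subgroup.mem_top a)
    obtain ⟨lb, hlb, hpb⟩ := exists_conj_list (c := c) (x := b) (hncl ▸ Subgroup.mem_top b)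
    -- the conjugating elements
    set P : G → Prop := fun y => ∃ g : G, y = g * c * g⁻¹ ∨ y = g * c⁻¹ * g⁻¹ with hP
    set f : G → G := fun y => if h : P y then h.choose else 1 with hf
    have hfspec : ∀ y, P y → y = f y * c * (f y)⁻¹ ∨ y = f y * c⁻¹ * (f y)⁻¹ := by
      intro y hy
      simp only [hf, dif_pos hy]
      exact hy.choose_spec
    set S : Finset G := ({a, b} : Finset G) ∪ (la.map f).toFinset ∪ (lb.map f).toFinset with hS
    set K : Subgroup G := Subgroup.closure (S : Set G) with hK
    have haK : a ∈ K := Subgroup.subset_closure (by simp [hS])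
    have hbK : b ∈ K := Subgroup.subset_closure (by simp [hS])
    have hfa : ∀ y ∈ la, f y ∈ K := fun y hy =>
      Subgroup.subset_closure (Finset.mem_coe.mpr (Finset.mem_union_left _
        (Finset.mem_union_right _ (List.mem_toFinset.mpr (List.mem_map_of_mem (f := f) hy)))))
    have hfb : ∀ y ∈ lb, f y ∈ K := fun y hy =>
      Subgroup.subset_closure (Finset.mem_coe.mpr
        (Finset.mem_union_right _ (List.mem_toFinset.mpr (List.mem_map_of_mem (f := f) hy))))
    haveI : IsSolvable K := hls S
    -- the key induction
    have key : ∀ n, a ∈ (derivedSeries K n).map K.subtype ∧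
        b ∈ (derivedSeries K n).map K.subtype := by
      intro n
      induction n with
      | zero =>
        exact ⟨⟨⟨a, haK⟩, Subgroup.mem_top _, rfl⟩, ⟨⟨b, hbK⟩, Subgroup.mem_top _, rfl⟩⟩
      | succ n ih =>
        obtain ⟨⟨a', ha', haa⟩, ⟨b', hb', hbb⟩⟩ := ih
        have hcmem : c ∈ (derivedSeries K (n + 1)).map K.subtype := by
          refine ⟨⁅a', b'⁆, ?_, ?_⟩
          · rw [derivedSeries_succ]
            exact Subgroup.commutator_mem_commutator ha' hb'
          · rw [map_commutatorElement, haa, hbb, hc]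
        have hconj : ∀ y, P y → (f y ∈ K) → y ∈ (derivedSeries K (n + 1)).map K.subtype := by
          intro y hy hfy
          rcases hfspec y hy with h | h
          · rw [h]; exact conj_mem_map_derived K (n + 1) hfy hcmem
          · rw [h]
            exact conj_mem_map_derived K (n + 1) hfy
              ((Subgroup.inv_mem_iff _).mpr hcmem)
        constructor
        · rw [← hpa]
          exact Subgroup.list_prod_mem _ (fun y hy => hconj y (hla y hy) (hfa y hy))
        · rw [← hpb]
          exact Subgroup.list_prod_mem _ (fun y hy => hconj y (hlb y hy) (hfb y hy))
    obtain ⟨n, hn⟩ := isSolvable_def K |>.mp ‹IsSolvable K›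
    obtain ⟨ha, hb⟩ := key n
    rw [hn, Subgroup.map_bot, Subgroup.mem_bot] at ha hb
    exact hab (by rw [ha, hb])
  -- Step 2: a commutative simple group is cyclic of prime order.
  letI : CommGroup G := { (inferInstance : Group G) with mul_comm := hcomm }
  haveI : IsCyclic G := IsSimpleGroup.isCyclic
  obtain ⟨g, hg⟩ := IsCyclic.exists_generator (α := G)
  have htop : Subgroup.zpowers g = ⊤ := by
    rw [eq_top_iff]; exact fun x _ => hg x
  haveI : Finite (⊤ : Subgroup G) := by
    rw [← htop, Subgroup.zpowers_eq_closure]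
    have := hlf {g}
    simpa using this
  haveI : Finite G := Finite.of_equiv _ Subgroup.topEquiv.toEquiv
  exact ⟨Nat.card G, IsSimpleGroup.prime_card, rfl⟩
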